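/- arXiv:2210.12606 — 2 statements merged into one kernel-verified Lean document; each statement's English description precedes it below -/
import Mathlib

section
/- Let w* minimize the objective L_OAT(w) = E[max(0, 1 - y·w^⊤x + ε‖w‖₁)] + (λ/2)‖w‖₂² (optimal adversarial training), over a distribution with E[xᵢ|y] = yμᵢ and conditionally independent features. If feature i is non-robust, i.e. |μᵢ| ≤ ε, then wᵢ* = 0. -/
open MeasureTheory Finset
open scoped ENNReal

/-- The joint distribution of `(x,y)` on `ℝ^d × {-1,1}`: with probability `q` the label is `1`
and the features are drawn from the product measure `Measure.pi ηp` (features conditionally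
independent given the label), with probability `1-q` the label is `-1` and the features are
drawn from `Measure.pi ηn`. -/
noncomputable def jointMeasure {d : ℕ} (ηp ηn : Fin d → Measure ℝ) (q : ℝ≥0∞) :
    Measure ((Fin d → ℝ) × ℝ) :=
  q • (Measure.pi ηp).map (fun x => (x, (1 : ℝ))) +
    (1 - q) • (Measure.pi ηn).map (fun x => (x, (-1 : ℝ)))

/-- The regularized soft-SVM objective. -/
noncomputable def svmLoss {d : ℕ} (μ : Measure ((Fin d → ℝ) × ℝ)) (lam : ℝ)
    (w : Fin d → ℝ) : ℝ :=
  (∫ p, max 0 (1 - p.2 * ∑ i, w i * p.1 i) ∂μ) + lam / 2 * ∑ i, (w i) ^ 2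

/-- The optimal adversarial training (OAT) objective: the worst-case ℓ∞ perturbation of
budget `ε` is substituted into the adversarial hinge loss, giving
`L_OAT(w) = E[max(0, 1 - y·wᵀx + ε‖w‖₁)] + (λ/2)‖w‖₂²`. -/
noncomputable def oatLoss {d : ℕ} (μ : Measure ((Fin d → ℝ) × ℝ)) (lam ε : ℝ)
    (w : Fin d → ℝ) : ℝ :=
  (∫ p, max 0 (1 - p.2 * (∑ i, w i * p.1 i) + ε * ∑ i, |w i|) ∂μ) +
    lam / 2 * ∑ i, (w i) ^ 2

lemma pi_map_eval {d : ℕ} (η : Fin d → Measure ℝ) [∀ j, IsProbabilityMeasure (η j)] (j : Fin d) :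
    (Measure.pi η).map (fun x => x j) = η j := by
  ext s hs
  rw [Measure.map_apply (measurable_pi_apply j) hs]
  have : (fun x : Fin d → ℝ => x j) ⁻¹' s
      = Set.pi Set.univ (Function.update (fun _ => Set.univ) j s) := Set.eval_preimage
  rw [this, Measure.pi_pi, Finset.prod_eq_single j]
  · simp
  · intro k _ hk; simp [Function.update_of_ne hk]
  · simp

lemma integrable_eval {d : ℕ} (η : Fin d → Measure ℝ) [∀ j, IsProbabilityMeasure (η j)]
    (j : Fin d) (h : Integrable (fun t : ℝ => t) (η j)) :
    Integrable (fun x : Fin d → ℝ => x j) (Measure.pi η) := by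
  have hm : AEMeasurable (fun x : Fin d → ℝ => x j) (Measure.pi η) :=
    (measurable_pi_apply j).aemeasurable
  have key := integrable_map_measure (g := fun t : ℝ => t) (f := fun x : Fin d → ℝ => x j)
    (μ := Measure.pi η) (by rw [pi_map_eval]; exact h.aestronglyMeasurable) hm
  rw [pi_map_eval] at key
  exact key.mp h

lemma integrable_hinge {d : ℕ} (η : Fin d → Measure ℝ) [∀ j, IsProbabilityMeasure (η j)]
    (hint : ∀ j, Integrable (fun t : ℝ => t) (η j)) (s C : ℝ) (v : Fin d → ℝ) :
    Integrable (fun x : Fin d → ℝ => max 0 (1 - s * ∑ j, v j * x j + C)) (Measure.pi η) := by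
  have hg : Integrable (fun x : Fin d → ℝ => 1 - s * ∑ j, v j * x j + C) (Measure.pi η) := by
    apply Integrable.add _ (integrable_const C)
    apply Integrable.sub (integrable_const 1)
    exact (integrable_finset_sum _ fun j _ => (integrable_eval η j (hint j)).const_mul (v j)).const_mul s
  refine hg.abs.mono' ?_ ?_
  · apply Measurable.aestronglyMeasurable
    apply measurable_const.max
    apply Measurable.add _ measurable_const
    apply measurable_const.sub
    exact (Finset.measurable_sum _ fun j _ => by fun_prop).const_mul s
  · filter_upwards with x
    rw [Real.norm_eq_abs, abs_of_nonneg (le_max_left _ _)]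
    exact max_le (abs_nonneg _) (le_abs_self _)

lemma max_le_integral_max (η : Measure ℝ) [IsProbabilityMeasure η]
    (h : Integrable (fun t : ℝ => t) η) (a b : ℝ) :
    max 0 (a - b * ∫ t, t ∂η) ≤ ∫ t, max 0 (a - b * t) ∂η := by
  have hab : Integrable (fun t : ℝ => a - b * t) η := (integrable_const a).sub (h.const_mul b)
  have h1 : ∫ t, (a - b * t) ∂η = a - b * ∫ t, t ∂η := by
    rw [integral_sub (integrable_const a) (h.const_mul b), integral_const, integral_const_mul]
    simp
  have h2 : |∫ t, (a - b * t) ∂η| ≤ ∫ t, |a - b * t| ∂η := by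
    simpa [Real.norm_eq_abs] using norm_integral_le_integral_norm (μ := η) (fun t => a - b * t)
  have hmax : ∀ z : ℝ, max 0 z = (z + |z|) / 2 := by
    intro z
    rcases le_total 0 z with hz | hz
    · rw [max_eq_right hz, abs_of_nonneg hz]; ring
    · rw [max_eq_left hz, abs_of_nonpos hz]; ring
  have h3 : ∫ t, max 0 (a - b * t) ∂η
      = ((∫ t, (a - b * t) ∂η) + ∫ t, |a - b * t| ∂η) / 2 := by
    rw [← integral_add hab hab.abs]
    rw [show (fun t => max 0 (a - b * t)) = fun t => ((a - b * t) + |a - b * t|) / 2 from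
      funext fun t => hmax _]
    rw [integral_div]
  rw [h1] at h2
  rw [h3, h1, hmax]
  have := abs_le.mp h2
  linarith [this.2]

lemma key_drop {n : ℕ} (η : Fin (n+1) → Measure ℝ) [∀ j, IsProbabilityMeasure (η j)]
    (hint : ∀ j, Integrable (fun t : ℝ => t) (η j)) (s ε : ℝ) (i : Fin (n+1))
    (w : Fin (n+1) → ℝ)
    (hm : 0 ≤ ε * |w i| - w i * (s * ∫ t, t ∂η i)) :
    ∫ x, max 0 (1 - s * ∑ j, Function.update w i 0 j * x j
        + ε * ∑ j, |Function.update w i 0 j|) ∂Measure.pi η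
      ≤ ∫ x, max 0 (1 - s * ∑ j, w j * x j + ε * ∑ j, |w j|) ∂Measure.pi η := by
  set π' := Measure.pi (fun j => η (i.succAbove j)) with hπ'
  set P := (η i).prod π' with hP
  have mp := measurePreserving_piFinSuccAbove η i
  set e := MeasurableEquiv.piFinSuccAbove (fun _ : Fin (n+1) => ℝ) i with he
  set A : (Fin n → ℝ) → ℝ := fun r =>
    1 - s * ∑ j, w (i.succAbove j) * r j + ε * ∑ j, |w (i.succAbove j)| with hA
  set c : ℝ := ε * |w i| with hc
  have mps := MeasurePreserving.symm e mp
  have hz1 : ∀ y : ℝ × (Fin n → ℝ), e.symm y i = y.1 := by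
    intro y
    simp [he, MeasurableEquiv.piFinSuccAbove_symm_apply, Fin.insertNth_apply_same]
  have hz2 : ∀ (y : ℝ × (Fin n → ℝ)) (j : Fin n), e.symm y (i.succAbove j) = y.2 j := by
    intro y j
    simp [he, MeasurableEquiv.piFinSuccAbove_symm_apply, Fin.insertNth_apply_succAbove]
  have claim1 : ∀ y : ℝ × (Fin n → ℝ),
      (1 - s * ∑ j, w j * (e.symm y) j + ε * ∑ j, |w j|)
        = (A y.2 + c) - (s * w i) * y.1 := by
    intro y
    rw [Fin.sum_univ_succAbove (fun j => w j * (e.symm y) j) i,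
        Fin.sum_univ_succAbove (fun j => |w j|) i, hz1 y]
    simp only [hz2 y, hA, hc]
    ring
  have claim2 : ∀ y : ℝ × (Fin n → ℝ),
      (1 - s * ∑ j, Function.update w i 0 j * (e.symm y) j
        + ε * ∑ j, |Function.update w i 0 j|) = A y.2 := by
    intro y
    rw [Fin.sum_univ_succAbove (fun j => Function.update w i 0 j * (e.symm y) j) i,
        Fin.sum_univ_succAbove (fun j => |Function.update w i 0 j|) i, hz1 y]
    simp only [hz2 y, Function.update_self, Function.update_of_ne (Fin.succAbove_ne i _), hA]
    simp
    try ring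
  have hmapP : Measure.map (⇑e.symm) P = Measure.pi η := mps.map_eq
  have emb := MeasurableEquiv.measurableEmbedding e.symm
  -- integrability on P
  have hIw : Integrable (fun x => max 0 (1 - s * ∑ j, w j * x j + ε * ∑ j, |w j|))
      (Measure.pi η) := integrable_hinge η hint s _ w
  have hIw' : Integrable (fun x => max 0 (1 - s * ∑ j, Function.update w i 0 j * x j
      + ε * ∑ j, |Function.update w i 0 j|)) (Measure.pi η) :=
    integrable_hinge η hint s _ _
  have hPw : Integrable (fun y : ℝ × (Fin n → ℝ) => max 0 ((A y.2 + c) - (s * w i) * y.1)) P := by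
    have := emb.integrable_map_iff.mp (hmapP ▸ hIw)
    refine this.congr ?_
    filter_upwards with y
    simp only [Function.comp_apply, claim1 y]
  have hPw' : Integrable (fun y : ℝ × (Fin n → ℝ) => max 0 (A y.2)) P := by
    have := emb.integrable_map_iff.mp (hmapP ▸ hIw')
    refine this.congr ?_
    filter_upwards with y
    simp only [Function.comp_apply, claim2 y]
  -- rewrite both sides as iterated integrals
  have hLHS : (∫ x, max 0 (1 - s * ∑ j, Function.update w i 0 j * x j
      + ε * ∑ j, |Function.update w i 0 j|) ∂Measure.pi η) = ∫ r, max 0 (A r) ∂π' := by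
    rw [← mps.integral_comp' (g := fun x => max 0 (1 - s * ∑ j, Function.update w i 0 j * x j
      + ε * ∑ j, |Function.update w i 0 j|))]
    rw [show (fun y : ℝ × (Fin n → ℝ) => max 0 (1 - s * ∑ j, Function.update w i 0 j * (e.symm y) j
      + ε * ∑ j, |Function.update w i 0 j|)) = fun y => max 0 (A y.2) from
      funext fun y => by rw [claim2 y]]
    rw [integral_prod_symm _ hPw']
    simp [integral_const]
  have hRHS : (∫ x, max 0 (1 - s * ∑ j, w j * x j + ε * ∑ j, |w j|) ∂Measure.pi η)
      = ∫ r, ∫ t, max 0 ((A r + c) - (s * w i) * t) ∂η i ∂π' := by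
    rw [← mps.integral_comp' (g := fun x => max 0 (1 - s * ∑ j, w j * x j + ε * ∑ j, |w j|))]
    rw [show (fun y : ℝ × (Fin n → ℝ) => max 0 (1 - s * ∑ j, w j * (e.symm y) j
      + ε * ∑ j, |w j|)) = fun y => max 0 ((A y.2 + c) - (s * w i) * y.1) from
      funext fun y => by rw [claim1 y]]
    exact integral_prod_symm _ hPw
  rw [hLHS, hRHS]
  refine integral_mono ?_ (hPw.integral_prod_right) ?_
  · have : Integrable (fun r : Fin n → ℝ => max 0 (1 - s * ∑ j, w (i.succAbove j) * r j
        + ε * ∑ j, |w (i.succAbove j)|)) π' :=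
      integrable_hinge _ (fun j => hint _) s _ _
    exact this.congr (by filter_upwards with r; rfl)
  · intro r
    have h1 := max_le_integral_max (η i) (hint i) (A r + c) (s * w i)
    have h2 : max 0 (A r) ≤ max 0 ((A r + c) - (s * w i) * ∫ t, t ∂η i) := by
      apply max_le_max le_rfl
      have : 0 ≤ c - (s * w i) * ∫ t, t ∂η i := by
        rw [hc]; nlinarith [hm]
      linarith
    exact h2.trans h1

lemma joint_decomp {d : ℕ} (ηp ηn : Fin d → Measure ℝ)
    [∀ i, IsProbabilityMeasure (ηp i)] [∀ i, IsProbabilityMeasure (ηn i)]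
    (q : ℝ≥0∞) (hq : q ≤ 1)
    (hip : ∀ j, Integrable (fun t : ℝ => t) (ηp j))
    (hin : ∀ j, Integrable (fun t : ℝ => t) (ηn j)) (ε : ℝ) (w : Fin d → ℝ) :
    (∫ p, max 0 (1 - p.2 * (∑ i, w i * p.1 i) + ε * ∑ i, |w i|) ∂jointMeasure ηp ηn q)
      = q.toReal * (∫ x, max 0 (1 - (1:ℝ) * ∑ j, w j * x j + ε * ∑ j, |w j|) ∂Measure.pi ηp)
      + (1 - q).toReal *
          (∫ x, max 0 (1 - (-1:ℝ) * ∑ j, w j * x j + ε * ∑ j, |w j|) ∂Measure.pi ηn) := by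
  set f : (Fin d → ℝ) × ℝ → ℝ :=
    fun p => max 0 (1 - p.2 * (∑ i, w i * p.1 i) + ε * ∑ i, |w i|) with hf
  have hfm : Measurable f := by
    apply Measurable.max measurable_const
    refine Measurable.add (Measurable.sub measurable_const ?_) measurable_const
    exact measurable_snd.mul
      (Finset.measurable_sum _ fun j _ => by fun_prop)
  have hq' : q ≠ ∞ := fun h => by simp [h] at hq
  have hq1' : 1 - q ≠ ∞ := fun h => by
    have : (1 : ℝ≥0∞) - q ≤ 1 := tsub_le_self
    simp [h] at this
  have hmp : AEMeasurable (fun x : Fin d → ℝ => (x, (1:ℝ))) (Measure.pi ηp) :=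
    (measurable_id.prodMk measurable_const).aemeasurable
  have hmn : AEMeasurable (fun x : Fin d → ℝ => (x, (-1:ℝ))) (Measure.pi ηn) :=
    (measurable_id.prodMk measurable_const).aemeasurable
  have h1 : Integrable f ((Measure.pi ηp).map (fun x => (x, (1:ℝ)))) := by
    rw [integrable_map_measure hfm.aestronglyMeasurable hmp]
    have := integrable_hinge ηp hip 1 (ε * ∑ j, |w j|) w
    exact this.congr (by filter_upwards with x; simp [hf, Function.comp])
  have h2 : Integrable f ((Measure.pi ηn).map (fun x => (x, (-1:ℝ)))) := by
    rw [integrable_map_measure hfm.aestronglyMeasurable hmn]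
    have := integrable_hinge ηn hin (-1) (ε * ∑ j, |w j|) w
    exact this.congr (by filter_upwards with x; simp [hf, Function.comp])
  rw [show jointMeasure ηp ηn q = q • (Measure.pi ηp).map (fun x => (x, (1 : ℝ))) +
      (1 - q) • (Measure.pi ηn).map (fun x => (x, (-1 : ℝ))) from rfl]
  rw [integral_add_measure (h1.smul_measure hq') (h2.smul_measure hq1'),
    integral_smul_measure, integral_smul_measure,
    integral_map hmp hfm.aestronglyMeasurable, integral_map hmn hfm.aestronglyMeasurable]
  simp only [hf, smul_eq_mul]

/-- optimal adversarial training leads to a robust model: any minimizer `w*`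
of `L_OAT` puts zero weight on every non-robust feature `i` (one with `|μᵢ| ≤ ε`, where
`E[xᵢ|y] = yμᵢ` and features are conditionally independent given the label). -/
theorem oat_is_robust {d : ℕ} (ηp ηn : Fin d → Measure ℝ)
    [∀ i, IsProbabilityMeasure (ηp i)] [∀ i, IsProbabilityMeasure (ηn i)]
    (q : ℝ≥0∞) (hq : q ≤ 1) (lam ε : ℝ) (hlam : 0 < lam) (hε : 0 ≤ ε)
    (μv : Fin d → ℝ)
    (hip : ∀ j, Integrable (fun t : ℝ => t) (ηp j))
    (hin : ∀ j, Integrable (fun t : ℝ => t) (ηn j))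
    (hmeanp : ∀ i, (∫ t, t ∂(ηp i)) = μv i)
    (hmeann : ∀ i, (∫ t, t ∂(ηn i)) = -(μv i))
    (wstar : Fin d → ℝ)
    (hmin : ∀ w, oatLoss (jointMeasure ηp ηn q) lam ε wstar ≤
      oatLoss (jointMeasure ηp ηn q) lam ε w)
    (i : Fin d) (hnonrobust : |μv i| ≤ ε) :
    wstar i = 0 := by
  have hd : d ≠ 0 := by rintro rfl; exact i.elim0
  obtain ⟨n, rfl⟩ := Nat.exists_eq_succ_of_ne_zero hd
  set w' := Function.update wstar i 0 with hw'
  -- the mean bound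
  have habs : wstar i * μv i ≤ ε * |wstar i| := by
    calc wstar i * μv i ≤ |wstar i * μv i| := le_abs_self _
      _ = |wstar i| * |μv i| := abs_mul _ _
      _ ≤ |wstar i| * ε := mul_le_mul_of_nonneg_left hnonrobust (abs_nonneg _)
      _ = ε * |wstar i| := mul_comm _ _
  -- key inequalities for each component
  have hkp := key_drop ηp hip 1 ε i wstar (by rw [hmeanp i]; linarith)
  have hkn := key_drop ηn hin (-1) ε i wstar (by rw [hmeann i]; nlinarith)
  -- hinge comparison over the joint measure
  have hdecomp := joint_decomp ηp ηn q hq hip hin ε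
  have hhinge : (∫ p, max 0 (1 - p.2 * (∑ j, w' j * p.1 j) + ε * ∑ j, |w' j|)
        ∂jointMeasure ηp ηn q)
      ≤ ∫ p, max 0 (1 - p.2 * (∑ j, wstar j * p.1 j) + ε * ∑ j, |wstar j|)
        ∂jointMeasure ηp ηn q := by
    rw [hdecomp w', hdecomp wstar]
    have h1 := mul_le_mul_of_nonneg_left hkp (ENNReal.toReal_nonneg (a := q))
    have h2 := mul_le_mul_of_nonneg_left hkn (ENNReal.toReal_nonneg (a := 1 - q))
    exact add_le_add h1 h2
  -- quadratic part
  have hsq : ∑ j, (w' j) ^ 2 = (∑ j, (wstar j) ^ 2) - (wstar i) ^ 2 := by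
    have h0 : ∀ j, (w' j) ^ 2 = Function.update (fun j => (wstar j) ^ 2) i 0 j := by
      intro j
      rcases eq_or_ne j i with rfl | h
      · simp [hw']
      · simp [hw', Function.update_of_ne h]
    rw [Finset.sum_congr rfl (fun j _ => h0 j), Finset.sum_update_of_mem (Finset.mem_univ i)]
    rw [Finset.sum_sdiff_eq_sub (Finset.singleton_subset_iff.mpr (Finset.mem_univ i)),
      Finset.sum_singleton]
    ring
  have hfin := hmin w'
  simp only [oatLoss] at hfin
  rw [hsq] at hfin
  have hzero : lam / 2 * (wstar i) ^ 2 ≤ 0 := by linarith [hhinge]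
  have : (wstar i) ^ 2 = 0 := by nlinarith [sq_nonneg (wstar i)]
  exact pow_eq_zero_iff two_ne_zero |>.mp this
end

section
/- Under adversarial training dynamics, where w^(t) minimizes w ↦ E[max(0, 1 - y·w^⊤(x + δ^(t)(x,y)))] + (λ/2)‖w‖₂² with δ^(t)(x,y) = -yε·sign(w^(t-1)), for any non-robust feature i (|μᵢ| < ε, μᵢ > 0): if wᵢ^(t) > 0 then wᵢ^(t+1) ≤ 0, and if wᵢ^(t) < 0 then wᵢ^(t+1) ≥ 0. -/
open MeasureTheory Finset
open scoped ENNReal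

/-- One step of adversarial training: the objective obtained by training on the adversarial
examples `x + δ(x,y)` with the worst-case perturbation `δ(x,y) = -yε·sign(wprev)` computed
against the previous model `wprev`. -/
noncomputable def atLoss {d : ℕ} (μ : Measure ((Fin d → ℝ) × ℝ)) (lam ε : ℝ)
    (wprev w : Fin d → ℝ) : ℝ :=
  (∫ p, max 0 (1 - p.2 * ∑ i, w i * (p.1 i + (-p.2 * ε * Real.sign (wprev i)))) ∂μ) +
    lam / 2 * ∑ i, (w i) ^ 2

lemma jensen_max (η : Measure ℝ) [IsProbabilityMeasure η]
    (hint : Integrable (fun t : ℝ => t) η) (a C : ℝ) :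
    max 0 (C + a * ∫ t, t ∂η) ≤ ∫ t, max 0 (C + a * t) ∂η := by
  set m := ∫ t, t ∂η with hm
  have hI : Integrable (fun t : ℝ => C + a * t) η := (integrable_const C).add (hint.const_mul a)
  have hImax : Integrable (fun t : ℝ => max 0 (C + a * t)) η := by
    simpa [max_comm] using hI.pos_part
  rcases le_or_gt (C + a * m) 0 with h | h
  · rw [max_eq_left h]
    exact integral_nonneg fun t => le_max_left _ _
  · rw [max_eq_right h.le]
    have : C + a * m = ∫ t, (C + a * t) ∂η := by
      rw [integral_add (integrable_const C) (hint.const_mul a), integral_const,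
        integral_const_mul, probReal_univ, one_smul]
    rw [this]
    exact integral_mono hI hImax fun t => le_max_right _ _

lemma integrable_eval_pi {k : ℕ} (η : Fin k → Measure ℝ) [∀ j, IsProbabilityMeasure (η j)]
    (hint : ∀ j, Integrable (fun t : ℝ => t) (η j)) (j : Fin k) :
    Integrable (fun x : Fin k → ℝ => x j) (Measure.pi η) := by
  obtain ⟨n, rfl⟩ : ∃ n, k = n + 1 := ⟨k - 1, by have := j.pos; omega⟩
  have mp := measurePreserving_piFinSuccAbove η j
  have h1 : Integrable (fun p : ℝ × (Fin n → ℝ) => p.1)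
      ((η j).prod (Measure.pi fun k => η (j.succAbove k))) := by
    have hmap : Measure.map Prod.fst ((η j).prod (Measure.pi fun k => η (j.succAbove k)))
        = η j := by simp
    have : Integrable (fun t : ℝ => t)
        (Measure.map Prod.fst ((η j).prod (Measure.pi fun k => η (j.succAbove k)))) := by
      rw [hmap]; exact hint j
    exact (integrable_map_measure aestronglyMeasurable_id measurable_fst.aemeasurable).mp this
  exact (mp.integrable_comp_emb
    (MeasurableEquiv.piFinSuccAbove (fun _ : Fin (n+1) => ℝ) j).measurableEmbedding).mpr h1

lemma integrable_affine_max {k : ℕ} (η : Fin k → Measure ℝ) [∀ j, IsProbabilityMeasure (η j)]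
    (hint : ∀ j, Integrable (fun t : ℝ => t) (η j)) (c : ℝ) (v : Fin k → ℝ) :
    Integrable (fun x : Fin k → ℝ => max 0 (c + ∑ j, v j * x j)) (Measure.pi η) := by
  have h1 : Integrable (fun x : Fin k → ℝ => c + ∑ j, v j * x j) (Measure.pi η) := by
    refine (integrable_const c).add ?_
    exact integrable_finset_sum _ fun j _ => (integrable_eval_pi η hint j).const_mul (v j)
  simpa [max_comm] using h1.pos_part

lemma key_pi {k : ℕ} (η : Fin k → Measure ℝ) [∀ j, IsProbabilityMeasure (η j)]
    (hint : ∀ j, Integrable (fun t : ℝ => t) (η j)) (i : Fin k) (v : Fin k → ℝ)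
    (c c' : ℝ) (hcc : c' ≤ c + v i * ∫ t, t ∂(η i)) :
    (∫ x, max 0 (c' + ∑ j, Function.update v i 0 j * x j) ∂(Measure.pi η)) ≤
      ∫ x, max 0 (c + ∑ j, v j * x j) ∂(Measure.pi η) := by
  obtain ⟨n, rfl⟩ : ∃ n, k = n + 1 := ⟨k - 1, by have := i.pos; omega⟩
  set ηr : Fin n → Measure ℝ := fun j => η (i.succAbove j) with hηr
  have mp := measurePreserving_piFinSuccAbove η i
  set e := MeasurableEquiv.piFinSuccAbove (fun _ : Fin (n+1) => ℝ) i with he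
  set g : ℝ × (Fin n → ℝ) → ℝ :=
    fun p => max 0 (c + v i * p.1 + ∑ j, v (i.succAbove j) * p.2 j) with hg
  set g' : ℝ × (Fin n → ℝ) → ℝ :=
    fun p => max 0 (c' + ∑ j, v (i.succAbove j) * p.2 j) with hg'
  have hge : ∀ x : Fin (n+1) → ℝ, g (e x) = max 0 (c + ∑ j, v j * x j) := by
    intro x
    have : ∑ j, v j * x j = v i * x i + ∑ j, v (i.succAbove j) * x (i.succAbove j) :=
      Fin.sum_univ_succAbove (fun j => v j * x j) i
    simp only [hg, he, MeasurableEquiv.piFinSuccAbove, MeasurableEquiv.coe_mk,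
      Equiv.coe_fn_mk, Fin.insertNthEquiv_symm_apply, Fin.removeNth]
    rw [this, add_assoc]
    rfl
  have hg'e : ∀ x : Fin (n+1) → ℝ, g' (e x) =
      max 0 (c' + ∑ j, Function.update v i 0 j * x j) := by
    intro x
    have h1 : ∑ j, Function.update v i 0 j * x j =
        Function.update v i 0 i * x i +
          ∑ j, Function.update v i 0 (i.succAbove j) * x (i.succAbove j) :=
      Fin.sum_univ_succAbove (fun j => Function.update v i 0 j * x j) i
    have h2 : ∀ j : Fin n, Function.update v i 0 (i.succAbove j) = v (i.succAbove j) :=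
      fun j => Function.update_of_ne (i.succAbove_ne j) _ _
    simp only [hg', he, MeasurableEquiv.piFinSuccAbove, MeasurableEquiv.coe_mk,
      Equiv.coe_fn_mk, Fin.insertNthEquiv_symm_apply, Fin.removeNth]
    rw [h1, Function.update_self, zero_mul, zero_add]
    congr 2
    exact Finset.sum_congr rfl fun j _ => by rw [h2]; rfl
  have hIg : Integrable g ((η i).prod (Measure.pi ηr)) := by
    refine (mp.integrable_comp_emb e.measurableEmbedding).mp ?_
    have : (g ∘ e) = fun x => max 0 (c + ∑ j, v j * x j) := funext hge
    rw [this]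
    exact integrable_affine_max η hint c v
  have hIg' : Integrable g' ((η i).prod (Measure.pi ηr)) := by
    refine (mp.integrable_comp_emb e.measurableEmbedding).mp ?_
    have : (g' ∘ e) = fun x => max 0 (c' + ∑ j, Function.update v i 0 j * x j) := funext hg'e
    rw [this]
    exact integrable_affine_max η hint c' _
  have hEq : ∫ x, max 0 (c + ∑ j, v j * x j) ∂(Measure.pi η)
      = ∫ p, g p ∂((η i).prod (Measure.pi ηr)) := by
    rw [← mp.integral_comp e.measurableEmbedding g]
    exact integral_congr_ae (Filter.Eventually.of_forall fun x => (hge x).symm)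
  have hEq' : ∫ x, max 0 (c' + ∑ j, Function.update v i 0 j * x j) ∂(Measure.pi η)
      = ∫ p, g' p ∂((η i).prod (Measure.pi ηr)) := by
    rw [← mp.integral_comp e.measurableEmbedding g']
    exact integral_congr_ae (Filter.Eventually.of_forall fun x => (hg'e x).symm)
  rw [hEq, hEq']
  rw [integral_prod_symm g hIg, integral_prod_symm g' hIg']
  refine integral_mono hIg'.integral_prod_right hIg.integral_prod_right fun z => ?_
  have hconst : (∫ t, g' (t, z) ∂(η i)) = g' (0, z) := by
    simp [hg', integral_const]
  calc (∫ t, g' (t, z) ∂(η i)) = max 0 (c' + ∑ j, v (i.succAbove j) * z j) := by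
        rw [hconst]
    _ ≤ max 0 ((c + ∑ j, v (i.succAbove j) * z j) + v i * ∫ t, t ∂(η i)) := by
        apply max_le_max le_rfl
        linarith
    _ ≤ ∫ t, max 0 ((c + ∑ j, v (i.succAbove j) * z j) + v i * t) ∂(η i) :=
        jensen_max (η i) (hint i) _ _
    _ = ∫ t, g (t, z) ∂(η i) := by
        refine integral_congr_ae (Filter.Eventually.of_forall fun t => ?_)
        simp only [hg]
        ring_nf

lemma joint_integral {d : ℕ} (ηp ηn : Fin d → Measure ℝ)
    [∀ i, IsProbabilityMeasure (ηp i)] [∀ i, IsProbabilityMeasure (ηn i)]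
    (q : ℝ≥0∞) (hq : q ≤ 1) (f : (Fin d → ℝ) × ℝ → ℝ) (hf : Continuous f)
    (h1 : Integrable (fun x => f (x, 1)) (Measure.pi ηp))
    (h2 : Integrable (fun x => f (x, -1)) (Measure.pi ηn)) :
    ∫ p, f p ∂(jointMeasure ηp ηn q) =
      q.toReal * ∫ x, f (x, 1) ∂(Measure.pi ηp) +
        (1 - q).toReal * ∫ x, f (x, -1) ∂(Measure.pi ηn) := by
  have hm1 : Measurable (fun x : Fin d → ℝ => (x, (1:ℝ))) :=
    measurable_id.prodMk measurable_const
  have hm2 : Measurable (fun x : Fin d → ℝ => (x, (-1:ℝ))) :=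
    measurable_id.prodMk measurable_const
  have hq' : q ≠ ∞ := (hq.trans_lt ENNReal.one_lt_top).ne
  have hq'' : (1 - q) ≠ ∞ := (tsub_le_self.trans_lt ENNReal.one_lt_top).ne
  have hf1 : Integrable f ((Measure.pi ηp).map (fun x => (x, (1:ℝ)))) :=
    (integrable_map_measure hf.aestronglyMeasurable hm1.aemeasurable).mpr h1
  have hf2 : Integrable f ((Measure.pi ηn).map (fun x => (x, (-1:ℝ)))) :=
    (integrable_map_measure hf.aestronglyMeasurable hm2.aemeasurable).mpr h2
  rw [jointMeasure, integral_add_measure (hf1.smul_measure hq') (hf2.smul_measure hq''),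
    integral_smul_measure, integral_smul_measure,
    integral_map hm1.aemeasurable hf.aestronglyMeasurable,
    integral_map hm2.aemeasurable hf.aestronglyMeasurable]
  simp [smul_eq_mul]

lemma sum_expand {d : ℕ} (w u x : Fin d → ℝ) (b : ℝ) :
    ∑ j, w j * (x j + b * u j) = (∑ j, w j * x j) + b * ∑ j, w j * u j := by
  rw [Finset.mul_sum, ← Finset.sum_add_distrib]
  exact Finset.sum_congr rfl fun j _ => by ring


/-- dynamics of adversarial training. If `w⁽ᵗ⁺¹⁾` minimizes the training
objective on the adversarial examples generated against `w⁽ᵗ⁾`, then for any non-robust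
feature `i` (`0 < μᵢ < ε`): `wᵢ⁽ᵗ⁾ > 0` implies `wᵢ⁽ᵗ⁺¹⁾ ≤ 0`, and `wᵢ⁽ᵗ⁾ < 0` implies
`wᵢ⁽ᵗ⁺¹⁾ ≥ 0`. -/
theorem adversarial_training_sign_flip {d : ℕ} (ηp ηn : Fin d → Measure ℝ)
    [∀ i, IsProbabilityMeasure (ηp i)] [∀ i, IsProbabilityMeasure (ηn i)]
    (q : ℝ≥0∞) (hq : q ≤ 1) (lam ε : ℝ) (hlam : 0 < lam) (hε : 0 < ε)
    (μv : Fin d → ℝ)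
    (hip : ∀ j, Integrable (fun t : ℝ => t) (ηp j))
    (hin : ∀ j, Integrable (fun t : ℝ => t) (ηn j))
    (hmeanp : ∀ i, (∫ t, t ∂(ηp i)) = μv i)
    (hmeann : ∀ i, (∫ t, t ∂(ηn i)) = -(μv i))
    (wt wnext : Fin d → ℝ)
    (hmin : ∀ w, atLoss (jointMeasure ηp ηn q) lam ε wt wnext ≤
      atLoss (jointMeasure ηp ηn q) lam ε wt w)
    (i : Fin d) (hpos : 0 < μv i) (hnonrobust : μv i < ε) :
    (0 < wt i → wnext i ≤ 0) ∧ (wt i < 0 → 0 ≤ wnext i) := by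
  set s : Fin d → ℝ := fun j => Real.sign (wt j) with hs
  have main : wnext i ≠ 0 → wnext i * (μv i - ε * s i) ≤ 0 → False := by
    intro hne hkey
    set w' := Function.update wnext i 0 with hw'
    -- canonical rewrite of the integrands
    have hform : ∀ (w : Fin d → ℝ),
        (fun p : (Fin d → ℝ) × ℝ =>
            max 0 (1 - p.2 * ∑ j, w j * (p.1 j + (-p.2 * ε * s j)))) ∘
          (fun x : Fin d → ℝ => (x, (1:ℝ))) =
        (fun x : Fin d → ℝ =>
            max 0 ((1 + ε * ∑ j, w j * s j) + ∑ j, (-(w j)) * x j)) := by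
      intro w
      funext x
      simp only [Function.comp]
      congr 1
      have h1 : ∀ j : Fin d, w j * (x j + (-(1:ℝ) * ε * s j)) = w j * (x j + (-ε) * s j) := by
        intro j; ring
      rw [show (∑ j, w j * (x j + (-(1:ℝ) * ε * s j)))
            = ∑ j, w j * (x j + (-ε) * s j) from Finset.sum_congr rfl fun j _ => h1 j,
        sum_expand]
      have h2 : ∑ j, (-(w j)) * x j = -∑ j, w j * x j := by
        rw [← Finset.sum_neg_distrib]
        exact Finset.sum_congr rfl fun j _ => by ring
      rw [h2]; ring
    have hformn : ∀ (w : Fin d → ℝ),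
        (fun p : (Fin d → ℝ) × ℝ =>
            max 0 (1 - p.2 * ∑ j, w j * (p.1 j + (-p.2 * ε * s j)))) ∘
          (fun x : Fin d → ℝ => (x, (-1:ℝ))) =
        (fun x : Fin d → ℝ =>
            max 0 ((1 + ε * ∑ j, w j * s j) + ∑ j, w j * x j)) := by
      intro w
      funext x
      simp only [Function.comp]
      congr 1
      have h1 : ∀ j : Fin d, w j * (x j + (-(-1:ℝ) * ε * s j)) = w j * (x j + ε * s j) := by
        intro j; ring
      rw [show (∑ j, w j * (x j + (-(-1:ℝ) * ε * s j)))
            = ∑ j, w j * (x j + ε * s j) from Finset.sum_congr rfl fun j _ => h1 j,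
        sum_expand]
      ring
    -- continuity
    have hcont : ∀ (w : Fin d → ℝ),
        Continuous (fun p : (Fin d → ℝ) × ℝ =>
          max 0 (1 - p.2 * ∑ j, w j * (p.1 j + (-p.2 * ε * s j)))) := by
      intro w
      have : Continuous (fun p : (Fin d → ℝ) × ℝ =>
          ∑ j, w j * (p.1 j + (-p.2 * ε * s j))) := by
        apply continuous_finset_sum
        intro j _
        fun_prop
      fun_prop
    -- the sum over the updated weight
    have hsum : ∀ u : Fin d → ℝ,
        ∑ j, w' j * u j = (∑ j, wnext j * u j) - wnext i * u i := by
      intro u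
      have h1 : ∀ j : Fin d, w' j * u j =
          Function.update (fun j => wnext j * u j) i 0 j := by
        intro j
        rcases eq_or_ne j i with rfl | hj
        · simp [hw']
        · simp [hw', Function.update_of_ne hj]
      rw [Finset.sum_congr rfl fun j _ => h1 j, Finset.sum_update_of_mem (mem_univ i)]
      rw [Finset.sum_eq_sum_sdiff_singleton_add (mem_univ i) (fun j => wnext j * u j)]
      ring
    -- constants
    set c : ℝ := 1 + ε * ∑ j, wnext j * s j with hc
    set c' : ℝ := 1 + ε * ∑ j, w' j * s j with hc'
    have hc'c : c' = c - ε * (wnext i * s i) := by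
      rw [hc', hc, hsum]; ring
    -- positive-label comparison
    have hupd : ∀ j, Function.update (fun j => -(wnext j)) i 0 j = -(w' j) := by
      intro j
      rcases eq_or_ne j i with rfl | hj
      · simp [hw']
      · simp [hw', Function.update_of_ne hj]
    have hP : (∫ x, max 0 (c' + ∑ j, (-(w' j)) * x j) ∂(Measure.pi ηp)) ≤
        ∫ x, max 0 (c + ∑ j, (-(wnext j)) * x j) ∂(Measure.pi ηp) := by
      have := key_pi ηp hip i (fun j => -(wnext j)) c c' (by
        rw [hmeanp i, hc'c]
        have hb : (fun j => -(wnext j)) i = -(wnext i) := rfl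
        ring_nf
        ring_nf at hkey
        linarith)
      simp only [hupd] at this
      simpa using this
    have hN : (∫ x, max 0 (c' + ∑ j, w' j * x j) ∂(Measure.pi ηn)) ≤
        ∫ x, max 0 (c + ∑ j, wnext j * x j) ∂(Measure.pi ηn) := by
      have := key_pi ηn hin i wnext c c' (by
        rw [hmeann i, hc'c]
        ring_nf
        ring_nf at hkey
        linarith)
      exact this
    -- integral decomposition
    have hI : ∀ (w : Fin d → ℝ),
        (∫ p, max 0 (1 - p.2 * ∑ j, w j * (p.1 j + (-p.2 * ε * s j)))
            ∂(jointMeasure ηp ηn q)) =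
          q.toReal * (∫ x, max 0 ((1 + ε * ∑ j, w j * s j) + ∑ j, (-(w j)) * x j)
              ∂(Measure.pi ηp)) +
            (1 - q).toReal * (∫ x, max 0 ((1 + ε * ∑ j, w j * s j) + ∑ j, w j * x j)
              ∂(Measure.pi ηn)) := by
      intro w
      have h1 := congrFun (hform w)
      have h2 := congrFun (hformn w)
      rw [joint_integral ηp ηn q hq _ (hcont w)
        (by
          rw [show (fun x : Fin d → ℝ =>
              max 0 (1 - (1:ℝ) * ∑ j, w j * (x j + (-(1:ℝ) * ε * s j))))
            = (fun x : Fin d → ℝ =>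
              max 0 ((1 + ε * ∑ j, w j * s j) + ∑ j, (-(w j)) * x j)) from hform w]
          exact integrable_affine_max ηp hip _ _)
        (by
          rw [show (fun x : Fin d → ℝ =>
              max 0 (1 - (-1:ℝ) * ∑ j, w j * (x j + (-(-1:ℝ) * ε * s j))))
            = (fun x : Fin d → ℝ =>
              max 0 ((1 + ε * ∑ j, w j * s j) + ∑ j, w j * x j)) from hformn w]
          exact integrable_affine_max ηn hin _ _)]
      congr 1
      · congr 1
        exact integral_congr_ae (Filter.Eventually.of_forall fun x => h1 x)
      · congr 1
        exact integral_congr_ae (Filter.Eventually.of_forall fun x => h2 x)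
    -- regularizer strict inequality
    have hS : ∑ j, (w' j) ^ 2 < ∑ j, (wnext j) ^ 2 := by
      refine Finset.sum_lt_sum (fun j _ => ?_) ⟨i, mem_univ i, ?_⟩
      · rcases eq_or_ne j i with rfl | hj
        · simp [hw']
          positivity
        · simp [hw', Function.update_of_ne hj]
      · have h0 : w' i = 0 := by simp [hw']
        rw [h0]
        have : (wnext i) ^ 2 ≠ 0 := pow_ne_zero 2 hne
        have h2 := sq_nonneg (wnext i)
        simpa using lt_of_le_of_ne h2 (Ne.symm this)
    -- combine
    have hII : (∫ p, max 0 (1 - p.2 * ∑ j, w' j * (p.1 j + (-p.2 * ε * s j)))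
          ∂(jointMeasure ηp ηn q)) ≤
        ∫ p, max 0 (1 - p.2 * ∑ j, wnext j * (p.1 j + (-p.2 * ε * s j)))
          ∂(jointMeasure ηp ηn q) := by
      rw [hI w', hI wnext]
      have e1 : (1 : ℝ) + ε * ∑ j, w' j * s j = c' := rfl
      have e2 : (1 : ℝ) + ε * ∑ j, wnext j * s j = c := rfl
      rw [e1, e2]
      exact add_le_add (mul_le_mul_of_nonneg_left hP ENNReal.toReal_nonneg)
        (mul_le_mul_of_nonneg_left hN ENNReal.toReal_nonneg)
    have hlt : atLoss (jointMeasure ηp ηn q) lam ε wt w' <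
        atLoss (jointMeasure ηp ηn q) lam ε wt wnext := by
      unfold atLoss
      have : lam / 2 * ∑ j, (w' j) ^ 2 < lam / 2 * ∑ j, (wnext j) ^ 2 :=
        mul_lt_mul_of_pos_left hS (by positivity)
      exact add_lt_add_of_le_of_lt hII this
    exact absurd (hmin w') (not_le_of_gt hlt)
  constructor
  · intro hwt
    by_contra hcon
    push_neg at hcon
    have hsign : s i = 1 := by rw [hs]; exact Real.sign_of_pos hwt
    refine main (ne_of_gt hcon) ?_
    rw [hsign]
    nlinarith
  · intro hwt
    by_contra hcon
    push_neg at hcon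
    have hsign : s i = -1 := by rw [hs]; exact Real.sign_of_neg hwt
    refine main (ne_of_lt hcon) ?_
    rw [hsign]
    nlinarith
end
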